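/- (Berkovich classification, existence part.) Let K be an algebraically closed field, complete with respect to a nontrivial non-Archimedean absolute value |·|. Then for every multiplicative seminorm ‖·‖ on K[X] extending |·| there exist a sequence (a_n) in K and a nonincreasing sequence (r_n) of nonnegative reals with |a_{n+1} − a_n| ≤ r_n for all n (nested closed disks), such that for every f ∈ K[X] one has ‖f‖ = lim_{n→∞} ‖f‖_{a_n,r_n} = inf_n ‖f‖_{a_n,r_n}. -/

import Mathlib

open Polynomial Filter

/-- A non-Archimedean absolute value on a field `K`. -/
def IsNonarchAbs {K : Type*} [Field K] (abv : K → ℝ) : Prop :=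
  (∀ x, 0 ≤ abv x) ∧ (∀ x, abv x = 0 ↔ x = 0) ∧
  (∀ x y, abv (x * y) = abv x * abv y) ∧
  (∀ x y, abv (x + y) ≤ max (abv x) (abv y))

/-- The Gauss seminorm `‖f‖_{a,r} = max_i |c_i| r^i` where `f(X+a) = Σ c_i X^i`. -/
noncomputable def gaussSN {K : Type*} [Field K] (abv : K → ℝ) (a : K) (r : ℝ)
    (f : Polynomial K) : ℝ :=
  ⨆ i : ℕ, abv ((f.comp (X + C a)).coeff i) * r ^ i

/-- A multiplicative seminorm on `K[X]` extending the absolute value `abv`. -/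
def IsMultSeminorm {K : Type*} [Field K] (abv : K → ℝ) (N : Polynomial K → ℝ) : Prop :=
  (∀ f, 0 ≤ N f) ∧ (∀ c : K, N (C c) = abv c) ∧
  (∀ f g, N (f + g) ≤ N f + N g) ∧ (∀ f g, N (f * g) = N f * N g)

namespace BerkAux

variable {K : Type*} [Field K] {abv : K → ℝ}

lemma abv_zero (h : IsNonarchAbs abv) : abv 0 = 0 := (h.2.1 0).2 rfl

lemma abv_one (h : IsNonarchAbs abv) : abv 1 = 1 := by
  have h1 : abv 1 * abv 1 = abv 1 * 1 := by
    rw [mul_one, ← h.2.2.1 1 1, mul_one]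
  exact mul_left_cancel₀ (fun hc => one_ne_zero ((h.2.1 1).1 hc)) h1

lemma abv_neg (h : IsNonarchAbs abv) (x : K) : abv (-x) = abv x := by
  have hm1 : abv (-1 : K) = 1 := by
    have : abv (-1 : K) * abv (-1 : K) = 1 := by
      rw [← h.2.2.1, neg_mul_neg, one_mul, abv_one h]
    rcases mul_self_eq_one_iff.1 this with h1 | h1
    · exact h1
    · nlinarith [h.1 (-1 : K)]
  rw [show (-x : K) = -1 * x by ring, h.2.2.1, hm1, one_mul]

lemma abv_add_eq (h : IsNonarchAbs abv) {x y : K} (hlt : abv x < abv y) :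
    abv (x + y) = abv y := by
  refine le_antisymm (le_trans (h.2.2.2 x y) (max_le hlt.le le_rfl)) ?_
  have h2 := h.2.2.2 (x + y) (-x)
  rw [add_neg_cancel_comm, abv_neg h] at h2
  rcases max_cases (abv (x + y)) (abv x) with ⟨he, _⟩ | ⟨he, _⟩
  · rw [he] at h2; exact h2
  · rw [he] at h2; exact absurd (lt_of_le_of_lt h2 hlt) (lt_irrefl _)

lemma abv_natCast_le_one (h : IsNonarchAbs abv) (n : ℕ) : abv (n : K) ≤ 1 := by
  induction n with
  | zero => simp [abv_zero h]
  | succ n ih =>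
    push_cast
    exact le_trans (h.2.2.2 _ _) (max_le ih (abv_one h).le)

noncomputable def gnorm (abv : K → ℝ) (r : ℝ) (p : Polynomial K) : ℝ :=
  ⨆ i : ℕ, abv (p.coeff i) * r ^ i

lemma gaussSN_eq_gnorm (abv : K → ℝ) (a : K) (r : ℝ) (f : Polynomial K) :
    gaussSN abv a r f = gnorm abv r (f.comp (X + C a)) := rfl

variable {r : ℝ}

lemma term_nonneg (habv : IsNonarchAbs abv) (hr : 0 ≤ r) (p : Polynomial K) (i : ℕ) : 0 ≤ abv (p.coeff i) * r ^ i :=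
  mul_nonneg (habv.1 _) (pow_nonneg hr i)

lemma gnorm_bdd (habv : IsNonarchAbs abv) (hr : 0 ≤ r) (p : Polynomial K) :
    BddAbove (Set.range fun i => abv (p.coeff i) * r ^ i) := by
  classical
  set g : ℕ → ℝ := fun i => abv (p.coeff i) * r ^ i with hg
  refine ⟨(Finset.range (p.natDegree + 1)).sup' Finset.nonempty_range_add_one g, ?_⟩
  rintro x ⟨i, rfl⟩
  by_cases h : i ≤ p.natDegree
  · exact Finset.le_sup' g (Finset.mem_range.2 (Nat.lt_succ_of_le h))
  · have hc : p.coeff i = 0 := p.coeff_eq_zero_of_natDegree_lt (lt_of_not_ge h)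
    have h0 : g i = 0 := by simp [hg, hc, abv_zero habv]
    rw [h0]
    exact le_trans (term_nonneg habv hr p 0)
      (Finset.le_sup' g (Finset.mem_range.2 (Nat.succ_pos _)))

lemma le_gnorm (habv : IsNonarchAbs abv) (hr : 0 ≤ r) (p : Polynomial K) (i : ℕ) :
    abv (p.coeff i) * r ^ i ≤ gnorm abv r p :=
  le_ciSup (gnorm_bdd habv hr p) i

lemma gnorm_le (habv : IsNonarchAbs abv) (hr : 0 ≤ r) {p : Polynomial K} {B : ℝ}
    (h : ∀ i, abv (p.coeff i) * r ^ i ≤ B) : gnorm abv r p ≤ B :=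
  ciSup_le h

lemma gnorm_nonneg (habv : IsNonarchAbs abv) (hr : 0 ≤ r) (p : Polynomial K) : 0 ≤ gnorm abv r p :=
  le_trans (term_nonneg habv hr p 0) (le_gnorm habv hr p 0)

lemma gnorm_exists (habv : IsNonarchAbs abv) (hr : 0 ≤ r) (p : Polynomial K) :
    ∃ i, gnorm abv r p = abv (p.coeff i) * r ^ i := by
  classical
  set g : ℕ → ℝ := fun i => abv (p.coeff i) * r ^ i with hg
  obtain ⟨i, hi, hieq⟩ := Finset.exists_mem_eq_sup' (s := Finset.range (p.natDegree + 1))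
    Finset.nonempty_range_add_one g
  refine ⟨i, le_antisymm (gnorm_le habv hr ?_) (le_gnorm habv hr p i)⟩
  intro j
  by_cases h : j ≤ p.natDegree
  · have : g j ≤ g i := hieq ▸ Finset.le_sup' g (Finset.mem_range.2 (Nat.lt_succ_of_le h))
    exact this
  · have hc : p.coeff j = 0 := p.coeff_eq_zero_of_natDegree_lt (lt_of_not_ge h)
    simp only [hc, abv_zero habv, zero_mul]
    exact term_nonneg habv hr p i

lemma gnorm_C (habv : IsNonarchAbs abv) (hr : 0 ≤ r) (c : K) : gnorm abv r (C c) = abv c := by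
  refine le_antisymm (gnorm_le habv hr ?_) ?_
  · intro i
    cases i with
    | zero => simp
    | succ n =>
      rw [coeff_C]
      simp [abv_zero habv, habv.1 c]
  · have := le_gnorm habv hr (C c) 0
    simpa using this

lemma gnorm_zero (habv : IsNonarchAbs abv) (hr : 0 ≤ r) : gnorm abv r (0 : Polynomial K) = 0 := by
  have := gnorm_C habv hr (0 : K)
  simpa [abv_zero habv] using this

lemma gnorm_one (habv : IsNonarchAbs abv) (hr : 0 ≤ r) : gnorm abv r (1 : Polynomial K) = 1 := by
  have := gnorm_C habv hr (1 : K)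
  simpa [abv_one habv] using this

lemma gnorm_C_mul (habv : IsNonarchAbs abv) (c : K) (g : Polynomial K) :
    gnorm abv r (C c * g) = abv c * gnorm abv r g := by
  rw [gnorm, gnorm, Real.mul_iSup_of_nonneg (habv.1 c)]
  congr 1 with i
  rw [coeff_C_mul, habv.2.2.1, mul_assoc]
lemma gnorm_linear_mul (habv : IsNonarchAbs abv) (hr : 0 ≤ r) (c : K) (g : Polynomial K) :
    gnorm abv r ((X + C c) * g) = max r (abv c) * gnorm abv r g := by
  classical
  set M := gnorm abv r g with hMdef
  set T := max r (abv c) with hTdef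
  have hM0 : 0 ≤ M := gnorm_nonneg habv hr g
  have hT0 : 0 ≤ T := le_trans hr (le_max_left _ _)
  have h0 : ((X + C c) * g).coeff 0 = c * g.coeff 0 := by
    rw [mul_coeff_zero]
    simp
  have hsucc : ∀ n, ((X + C c) * g).coeff (n + 1) = g.coeff n + c * g.coeff (n + 1) := by
    intro n
    rw [add_mul, coeff_add, coeff_X_mul, coeff_C_mul]
  apply le_antisymm
  · apply gnorm_le habv hr
    intro i
    match i with
    | 0 =>
      rw [h0, pow_zero, mul_one, habv.2.2.1]
      have hg0 : abv (g.coeff 0) ≤ M := by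
        have := le_gnorm habv hr g 0
        simpa using this
      exact mul_le_mul (le_max_right _ _) hg0 (habv.1 _) hT0
    | n + 1 =>
      rw [hsucc n]
      calc abv (g.coeff n + c * g.coeff (n + 1)) * r ^ (n + 1)
          ≤ max (abv (g.coeff n)) (abv (c * g.coeff (n + 1))) * r ^ (n + 1) :=
            mul_le_mul_of_nonneg_right (habv.2.2.2 _ _) (pow_nonneg hr _)
        _ = max (abv (g.coeff n) * r ^ (n + 1)) (abv c * abv (g.coeff (n + 1)) * r ^ (n + 1)) := by
            rw [habv.2.2.1, max_mul_of_nonneg _ _ (pow_nonneg hr _)]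
        _ ≤ T * M := by
            apply max_le
            · calc abv (g.coeff n) * r ^ (n + 1) = r * (abv (g.coeff n) * r ^ n) := by ring
                _ ≤ r * M := mul_le_mul_of_nonneg_left (le_gnorm habv hr g n) hr
                _ ≤ T * M := mul_le_mul_of_nonneg_right (le_max_left _ _) hM0
            · calc abv c * abv (g.coeff (n + 1)) * r ^ (n + 1)
                  = abv c * (abv (g.coeff (n + 1)) * r ^ (n + 1)) := by ring
                _ ≤ abv c * M := mul_le_mul_of_nonneg_left (le_gnorm habv hr g (n + 1)) (habv.1 c)
                _ ≤ T * M := mul_le_mul_of_nonneg_right (le_max_right _ _) hM0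
  · rcases hM0.eq_or_lt with hM | hM
    · rw [← hM, mul_zero]
      exact gnorm_nonneg habv hr _
    by_cases hcr : r ≤ abv c
    · -- T = abv c
      have hT : T = abv c := max_eq_right hcr
      rcases (habv.1 c).eq_or_lt with hc0 | hc0
      · rw [hT, ← hc0, zero_mul]
        exact gnorm_nonneg habv hr _
      have hex : ∃ i, M ≤ abv (g.coeff i) * r ^ i := by
        obtain ⟨i, hi⟩ := gnorm_exists habv hr g
        exact ⟨i, hi.le⟩
      set i0 := Nat.find hex with hi0def
      have hi0 : abv (g.coeff i0) * r ^ i0 = M :=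
        le_antisymm (le_gnorm habv hr g i0) (Nat.find_spec hex)
      have hltM : ∀ j < i0, abv (g.coeff j) * r ^ j < M := fun j hj =>
        lt_of_not_ge (Nat.find_min hex hj)
      match hi0eq : i0 with
      | 0 =>
        have : abv (((X + C c) * g).coeff 0) * r ^ 0 = T * M := by
          rw [h0, pow_zero, mul_one, habv.2.2.1, hT, ← hi0]
          simp
        rw [← this]
        exact le_gnorm habv hr _ 0
      | n + 1 =>
        have hrpos : 0 < r := by
          rcases hr.eq_or_lt with h | h
          · exfalso
            rw [← h] at hi0
            simp [zero_pow] at hi0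
            exact hM.ne (by rw [← hi0])
          · exact h
        have hrp : (0:ℝ) < r ^ (n + 1) := pow_pos hrpos _
        have hkey : abv (g.coeff n) < abv (c * g.coeff (n + 1)) := by
          have h1 : abv (g.coeff n) * r ^ (n + 1) < abv (c * g.coeff (n + 1)) * r ^ (n + 1) := by
            have e1 : abv (g.coeff n) * r ^ (n + 1) = r * (abv (g.coeff n) * r ^ n) := by ring
            have e2 : abv (c * g.coeff (n + 1)) * r ^ (n + 1) = abv c * M := by
              rw [habv.2.2.1, mul_assoc, hi0]
            rw [e1, e2]
            calc r * (abv (g.coeff n) * r ^ n) < r * M :=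
                  (mul_lt_mul_iff_right₀ hrpos).2 (hltM n (Nat.lt_succ_self n))
              _ ≤ abv c * M := mul_le_mul_of_nonneg_right hcr hM0
          exact lt_of_mul_lt_mul_right h1 hrp.le
        have heq : abv (((X + C c) * g).coeff (n + 1)) = abv (c * g.coeff (n + 1)) := by
          rw [hsucc n]
          exact abv_add_eq habv hkey
        have : abv (((X + C c) * g).coeff (n + 1)) * r ^ (n + 1) = T * M := by
          rw [heq, habv.2.2.1, hT, mul_assoc, hi0]
        rw [← this]
        exact le_gnorm habv hr _ _
    · push_neg at hcr
      have hrpos : 0 < r := lt_of_le_of_lt (habv.1 c) hcr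
      have hT : T = r := max_eq_left hcr.le
      obtain ⟨i, hieq⟩ := gnorm_exists habv hr g
      have hid : i ≤ g.natDegree := by
        by_contra h'
        have hc : g.coeff i = 0 := g.coeff_eq_zero_of_natDegree_lt (lt_of_not_ge h')
        rw [hc, abv_zero habv, zero_mul] at hieq
        exact hM.ne (by rw [← hieq])
      set P : ℕ → Prop := fun j => M ≤ abv (g.coeff j) * r ^ j with hPdef
      have hPi : P i := hieq.le
      set i1 := Nat.findGreatest P g.natDegree with hi1def
      have hi1P : P i1 := Nat.findGreatest_spec hid hPi
      have hi1 : abv (g.coeff i1) * r ^ i1 = M :=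
        le_antisymm (le_gnorm habv hr g i1) hi1P
      have hnext : abv (g.coeff (i1 + 1)) * r ^ (i1 + 1) < M := by
        by_cases h' : i1 + 1 ≤ g.natDegree
        · exact lt_of_not_ge (Nat.findGreatest_is_greatest (Nat.lt_succ_self i1) h')
        · have hc : g.coeff (i1 + 1) = 0 := g.coeff_eq_zero_of_natDegree_lt (lt_of_not_ge h')
          rw [hc, abv_zero habv, zero_mul]
          exact hM
      have hkey : abv (c * g.coeff (i1 + 1)) < abv (g.coeff i1) := by
        have h1 : abv (c * g.coeff (i1 + 1)) * r ^ (i1 + 1) < abv (g.coeff i1) * r ^ (i1 + 1) := by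
          have e2 : abv (g.coeff i1) * r ^ (i1 + 1) = r * M := by
            rw [← hi1]; ring
          rw [habv.2.2.1, mul_assoc, e2]
          calc abv c * (abv (g.coeff (i1 + 1)) * r ^ (i1 + 1)) ≤ abv c * M :=
                mul_le_mul_of_nonneg_left (le_gnorm habv hr g (i1 + 1)) (habv.1 c)
            _ < r * M := (mul_lt_mul_iff_left₀ hM).2 hcr
        exact lt_of_mul_lt_mul_right h1 (pow_pos hrpos _).le
      have heq : abv (((X + C c) * g).coeff (i1 + 1)) = abv (g.coeff i1) := by
        rw [hsucc i1, add_comm (g.coeff i1)]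
        exact abv_add_eq habv hkey
      have : abv (((X + C c) * g).coeff (i1 + 1)) * r ^ (i1 + 1) = T * M := by
        rw [heq, hT, ← hi1]; ring
      rw [← this]
      exact le_gnorm habv hr _ _
lemma gnorm_prod (habv : IsNonarchAbs abv) (hr : 0 ≤ r) (c : K) (s : Multiset K) :
    gnorm abv r (C c * (s.map fun b => X + C b).prod)
      = abv c * (s.map fun b => max r (abv b)).prod := by
  induction s using Multiset.induction with
  | empty => simp [gnorm_C habv hr]
  | cons b s ih =>
    rw [Multiset.map_cons, Multiset.prod_cons, Multiset.map_cons, Multiset.prod_cons]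
    have hcomm : C c * ((X + C b) * (s.map fun b => X + C b).prod)
        = (X + C b) * (C c * (s.map fun b => X + C b).prod) := by ring
    rw [hcomm, gnorm_linear_mul habv hr, ih]
    ring

lemma comp_factored_aux (α : K) (s : Multiset K) :
    (s.map fun b => X - C b).prod.comp (X + C α)
      = (s.map fun b => X + C (α - b)).prod := by
  induction s using Multiset.induction with
  | empty => simp
  | cons b s ih =>
    rw [Multiset.map_cons, Multiset.prod_cons, mul_comp, ih,
      Multiset.map_cons, Multiset.prod_cons]
    congr 1
    rw [sub_comp, X_comp, C_comp, C_sub]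
    ring

lemma comp_factored (α c : K) (s : Multiset K) :
    (C c * (s.map fun b => X - C b).prod).comp (X + C α)
      = C c * (s.map fun b => X + C (α - b)).prod := by
  rw [mul_comp, C_comp, comp_factored_aux]

lemma gaussSN_factor [IsAlgClosed K] (habv : IsNonarchAbs abv) (hr : 0 ≤ r) (α : K)
    (f : Polynomial K) :
    gaussSN abv α r f
      = abv f.leadingCoeff * (f.roots.map fun b => max r (abv (α - b))).prod := by
  have hfe := (IsAlgClosed.splits f).eq_prod_roots
  rw [gaussSN_eq_gnorm]
  conv_lhs => rw [hfe]
  have h2 : (f.roots.map fun b => X + C (α - b))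
      = ((f.roots.map fun b => α - b).map fun b => X + C b) := by
    rw [Multiset.map_map]; rfl
  rw [comp_factored, h2, gnorm_prod habv hr, Multiset.map_map]
  rfl
lemma pow_bound {L M : ℝ} (hL : 0 ≤ L) (hM : 0 ≤ M)
    (h : ∀ n : ℕ, L ^ n ≤ ((n : ℝ) + 1) * M ^ n) : L ≤ M := by
  by_contra hlt
  push_neg at hlt
  have hLpos : 0 < L := lt_of_le_of_lt hM hlt
  set q := M / L with hq
  have hq0 : 0 ≤ q := div_nonneg hM hLpos.le
  have hq1 : q < 1 := (div_lt_one hLpos).2 hlt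
  have hone : ∀ n : ℕ, (1 : ℝ) ≤ ((n : ℝ) + 1) * q ^ n := by
    intro n
    have h1 : L ^ n ≤ ((n : ℝ) + 1) * M ^ n := h n
    have h2 : (0 : ℝ) < L ^ n := pow_pos hLpos n
    have h3 : (1 : ℝ) ≤ ((n : ℝ) + 1) * M ^ n / L ^ n := by
      rw [le_div_iff₀ h2, one_mul]; exact h1
    calc (1 : ℝ) ≤ ((n : ℝ) + 1) * M ^ n / L ^ n := h3
      _ = ((n : ℝ) + 1) * q ^ n := by rw [hq, div_pow, mul_div_assoc]
  have htend : Tendsto (fun n : ℕ => ((n : ℝ) + 1) * q ^ n) atTop (nhds 0) := by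
    have h1 := tendsto_self_mul_const_pow_of_lt_one hq0 hq1
    have h2 := tendsto_pow_atTop_nhds_zero_of_lt_one hq0 hq1
    have := h1.add h2
    rw [add_zero] at this
    convert this using 2 with n
    ring
  have : (1 : ℝ) ≤ 0 := ge_of_tendsto htend (Eventually.of_forall hone)
  linarith

section N
variable {N : Polynomial K → ℝ} (hN : IsMultSeminorm abv N) (habv : IsNonarchAbs abv)

lemma N_zero (habv : IsNonarchAbs abv) (hN : IsMultSeminorm abv N) : N 0 = 0 := by
  have := hN.2.1 0
  rwa [map_zero, abv_zero habv] at this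

lemma N_one (habv : IsNonarchAbs abv) (hN : IsMultSeminorm abv N) : N 1 = 1 := by
  have := hN.2.1 1
  rwa [map_one, abv_one habv] at this

lemma N_pow (habv : IsNonarchAbs abv) (hN : IsMultSeminorm abv N) (f : Polynomial K) (n : ℕ) :
    N (f ^ n) = N f ^ n := by
  induction n with
  | zero => simpa using N_one habv hN
  | succ n ih => rw [pow_succ, pow_succ, hN.2.2.2, ih]

lemma N_neg (hN : IsMultSeminorm abv N) (habv : IsNonarchAbs abv) (f : Polynomial K) :
    N (-f) = N f := by
  have : (-f : Polynomial K) = C (-1) * f := by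
    rw [map_neg, map_one, neg_mul, one_mul]
  rw [this, hN.2.2.2, hN.2.1, abv_neg habv, abv_one habv, one_mul]

lemma N_sum_le (habv : IsNonarchAbs abv) (hN : IsMultSeminorm abv N) {ι : Type*}
    (s : Finset ι) (f : ι → Polynomial K) : N (∑ i ∈ s, f i) ≤ ∑ i ∈ s, N (f i) := by
  classical
  induction s using Finset.induction with
  | empty => simp [N_zero habv hN]
  | insert x s hx ih =>
    rw [Finset.sum_insert hx, Finset.sum_insert hx]
    exact le_trans (hN.2.2.1 _ _) (by linarith)

lemma N_nonarch (habv : IsNonarchAbs abv) (hN : IsMultSeminorm abv N)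
    (f g : Polynomial K) : N (f + g) ≤ max (N f) (N g) := by
  set M := max (N f) (N g) with hM
  have hM0 : 0 ≤ M := le_trans (hN.1 f) (le_max_left _ _)
  refine pow_bound (hN.1 _) hM0 ?_
  intro n
  rw [← N_pow habv hN, add_pow]
  calc N (∑ k ∈ Finset.range (n + 1), f ^ k * g ^ (n - k) * (n.choose k : Polynomial K))
      ≤ ∑ k ∈ Finset.range (n + 1), N (f ^ k * g ^ (n - k) * (n.choose k : Polynomial K)) :=
        N_sum_le habv hN _ _
    _ ≤ ∑ k ∈ Finset.range (n + 1), M ^ n := by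
        apply Finset.sum_le_sum
        intro k hk
        rw [Finset.mem_range, Nat.lt_succ_iff] at hk
        rw [hN.2.2.2, hN.2.2.2, N_pow habv hN, N_pow habv hN]
        have hc : N ((n.choose k : Polynomial K)) ≤ 1 := by
          rw [show ((n.choose k : Polynomial K)) = C ((n.choose k : K)) by
            rw [map_natCast C], hN.2.1]
          exact abv_natCast_le_one habv _
        have h1 : N f ^ k ≤ M ^ k := pow_le_pow_left₀ (hN.1 f) (le_max_left _ _) k
        have h2 : N g ^ (n - k) ≤ M ^ (n - k) :=
          pow_le_pow_left₀ (hN.1 g) (le_max_right _ _) _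
        calc N f ^ k * N g ^ (n - k) * N ((n.choose k : Polynomial K))
            ≤ M ^ k * M ^ (n - k) * 1 := by
              apply mul_le_mul _ hc (hN.1 _) (by positivity)
              exact mul_le_mul h1 h2 (pow_nonneg (hN.1 g) _) (pow_nonneg hM0 _)
          _ = M ^ n := by rw [mul_one, ← pow_add, Nat.add_sub_cancel' hk]
    _ = ((n : ℝ) + 1) * M ^ n := by
        rw [Finset.sum_const, Finset.card_range, nsmul_eq_mul]
        push_cast
        ring

lemma N_add_eq (habv : IsNonarchAbs abv) (hN : IsMultSeminorm abv N)
    {f g : Polynomial K} (h : N f < N g) : N (f + g) = N g := by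
  refine le_antisymm (le_trans (N_nonarch habv hN f g) (max_le h.le le_rfl)) ?_
  have h2 := N_nonarch habv hN (f + g) (-f)
  rw [add_neg_cancel_comm, N_neg hN habv] at h2
  rcases max_cases (N (f + g)) (N f) with ⟨he, _⟩ | ⟨he, _⟩
  · rw [he] at h2; exact h2
  · rw [he] at h2; exact absurd (lt_of_le_of_lt h2 h) (lt_irrefl _)

lemma N_prod (habv : IsNonarchAbs abv) (hN : IsMultSeminorm abv N) (s : Multiset K) :
    N ((s.map fun b => X - C b).prod) = (s.map fun b => N (X - C b)).prod := by
  induction s using Multiset.induction with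
  | empty => simpa using N_one habv hN
  | cons b s ih =>
    rw [Multiset.map_cons, Multiset.prod_cons, Multiset.map_cons, Multiset.prod_cons,
      hN.2.2.2, ih]

lemma N_factor [IsAlgClosed K] (habv : IsNonarchAbs abv) (hN : IsMultSeminorm abv N)
    (f : Polynomial K) :
    N f = abv f.leadingCoeff * (f.roots.map fun b => N (X - C b)).prod := by
  conv_lhs => rw [(IsAlgClosed.splits f).eq_prod_roots]
  rw [hN.2.2.2, hN.2.1, N_prod habv hN]

end N
lemma multiset_prod_le {u v : K → ℝ} (hu : ∀ x, 0 ≤ u x) (huv : ∀ x, u x ≤ v x)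
    (s : Multiset K) : 0 ≤ (s.map u).prod ∧ (s.map u).prod ≤ (s.map v).prod := by
  induction s using Multiset.induction with
  | empty => simp
  | cons b s ih =>
    simp only [Multiset.map_cons, Multiset.prod_cons]
    constructor
    · exact mul_nonneg (hu b) ih.1
    · exact mul_le_mul (huv b) ih.2 ih.1 (le_trans (hu b) (huv b))

end BerkAux

open BerkAux in
/-- Berkovich classification, existence part. -/
theorem stmt3 {K : Type*} [Field K] [IsAlgClosed K] (abv : K → ℝ)
    (habv : IsNonarchAbs abv)
    (hnontriv : ∃ x : K, abv x ≠ 0 ∧ abv x ≠ 1)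
    (hcomplete : ∀ s : ℕ → K,
      (∀ ε : ℝ, 0 < ε → ∃ N, ∀ m ≥ N, ∀ n ≥ N, abv (s m - s n) < ε) →
      ∃ x : K, ∀ ε : ℝ, 0 < ε → ∃ N, ∀ n ≥ N, abv (s n - x) < ε) :
    ∀ N : Polynomial K → ℝ, IsMultSeminorm abv N →
      ∃ (a : ℕ → K) (r : ℕ → ℝ),
        (∀ n, 0 ≤ r n) ∧ (∀ n, r (n + 1) ≤ r n) ∧
        (∀ n, abv (a (n + 1) - a n) ≤ r n) ∧
        ∀ f : Polynomial K,
          N f = (⨅ n, gaussSN abv (a n) (r n) f) ∧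
          Tendsto (fun n => gaussSN abv (a n) (r n) f) atTop (nhds (N f)) := by
  intro N hN
  classical
  have hbdd : BddBelow (Set.range fun a : K => N (X - C a)) :=
    ⟨0, by rintro x ⟨c, rfl⟩; exact hN.1 _⟩
  set R := ⨅ c : K, N (X - C c) with hRdef
  have hRle : ∀ c : K, R ≤ N (X - C c) := fun c => ciInf_le hbdd c
  have hR0 : 0 ≤ R := le_ciInf fun c => hN.1 _
  have hbex : ∀ n : ℕ, ∃ c : K, N (X - C c) < R + 1 / ((n : ℝ) + 1) := by
    intro n
    have hpos : (0 : ℝ) < 1 / ((n : ℝ) + 1) := by positivity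
    exact exists_lt_of_ciInf_lt (lt_add_of_pos_right R hpos)
  choose b hb using hbex
  let a : ℕ → K := fun n =>
    Nat.rec (b 0) (fun n an => if N (X - C (b (n + 1))) ≤ N (X - C an) then b (n + 1) else an) n
  let r : ℕ → ℝ := fun n => N (X - C (a n))
  have hastep : ∀ n : ℕ,
      a (n + 1) = if N (X - C (b (n + 1))) ≤ N (X - C (a n)) then b (n + 1) else a n :=
    fun n => rfl
  have hrmono : ∀ n, r (n + 1) ≤ r n := by
    intro n
    show N (X - C (a (n + 1))) ≤ N (X - C (a n))
    rw [hastep n]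
    by_cases h : N (X - C (b (n + 1))) ≤ N (X - C (a n))
    · rw [if_pos h]; exact h
    · rw [if_neg h]
  have hrmono' : ∀ {m n : ℕ}, m ≤ n → r n ≤ r m := by
    intro m n h
    exact antitone_nat_of_succ_le hrmono h
  have hr0 : ∀ n, 0 ≤ r n := fun n => hN.1 _
  have hrR : ∀ n, R ≤ r n := fun n => hRle _
  have hrlt : ∀ n, r n < R + 1 / ((n : ℝ) + 1) := by
    intro n
    induction n with
    | zero => exact hb 0
    | succ n ih =>
      show N (X - C (a (n + 1))) < _
      rw [hastep n]
      by_cases h : N (X - C (b (n + 1))) ≤ N (X - C (a n))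
      · rw [if_pos h]; exact_mod_cast hb (n + 1)
      · rw [if_neg h]
        push_neg at h
        exact lt_trans h (by exact_mod_cast hb (n + 1))
  have hrtend : Tendsto r atTop (nhds R) := by
    have h1 : Tendsto (fun n : ℕ => R + 1 / ((n : ℝ) + 1)) atTop (nhds (R + 0)) :=
      tendsto_const_nhds.add tendsto_one_div_add_atTop_nhds_zero_nat
    rw [add_zero] at h1
    exact tendsto_of_tendsto_of_tendsto_of_le_of_le tendsto_const_nhds h1 hrR
      (fun n => (hrlt n).le)
  have hnest : ∀ n, abv (a (n + 1) - a n) ≤ r n := by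
    intro n
    have he : C (a (n + 1) - a n) = (X - C (a n)) + -(X - C (a (n + 1))) := by
      rw [C_sub]; ring
    have h1 : abv (a (n + 1) - a n) = N (C (a (n + 1) - a n)) := (hN.2.1 _).symm
    rw [h1, he]
    refine le_trans (N_nonarch habv hN _ _) ?_
    rw [N_neg hN habv]
    exact max_le le_rfl (hrmono n)
  have hfac_le : ∀ (bb : K) (n : ℕ), N (X - C bb) ≤ max (r n) (abv (a n - bb)) := by
    intro bb n
    have he : (X - C bb : Polynomial K) = (X - C (a n)) + C (a n - bb) := by
      rw [C_sub]; ring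
    rw [he]
    refine le_trans (N_nonarch habv hN _ _) ?_
    rw [hN.2.1]
  have hfac : ∀ bb : K,
      Tendsto (fun n => max (r n) (abv (a n - bb))) atTop (nhds (N (X - C bb))) := by
    intro bb
    by_cases hcase : ∀ n, abv (a n - bb) ≤ r n
    · have hNbb : N (X - C bb) = R := by
        refine le_antisymm ?_ (hRle bb)
        refine ge_of_tendsto hrtend (Eventually.of_forall fun n => ?_)
        exact le_trans (hfac_le bb n) (max_eq_left (hcase n)).le
      rw [hNbb]
      exact hrtend.congr fun n => (max_eq_left (hcase n)).symm
    · push_neg at hcase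
      obtain ⟨n0, hn0⟩ := hcase
      have hNbb : N (X - C bb) = abv (a n0 - bb) := by
        have he : (X - C bb : Polynomial K) = (X - C (a n0)) + C (a n0 - bb) := by
          rw [C_sub]; ring
        have hlt : N (X - C (a n0)) < N (C (a n0 - bb)) := by
          rw [hN.2.1]; exact hn0
        rw [he, N_add_eq habv hN hlt, hN.2.1]
      have hdist : ∀ m, n0 ≤ m → abv (a m - a n0) ≤ r n0 := by
        intro m hm
        induction m, hm using Nat.le_induction with
        | base => rw [sub_self, abv_zero habv]; exact hr0 n0
        | succ m hm ih =>
          have he : a (m + 1) - a n0 = (a (m + 1) - a m) + (a m - a n0) := by ring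
          rw [he]
          refine le_trans (habv.2.2.2 _ _) (max_le ?_ ih)
          exact le_trans (hnest m) (hrmono' hm)
      have hev : ∀ m, n0 ≤ m → max (r m) (abv (a m - bb)) = abv (a n0 - bb) := by
        intro m hm
        have h1 : abv (a m - bb) = abv (a n0 - bb) := by
          have he : a m - bb = (a m - a n0) + (a n0 - bb) := by ring
          rw [he]
          exact abv_add_eq habv (lt_of_le_of_lt (hdist m hm) hn0)
        rw [h1]
        exact max_eq_right (le_trans (hrmono' hm) hn0.le)
      rw [hNbb]
      exact tendsto_atTop_of_eventually_const hev
  refine ⟨a, r, hr0, hrmono, hnest, ?_⟩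
  intro f
  have hgauss : ∀ n, gaussSN abv (a n) (r n) f
      = abv f.leadingCoeff * (f.roots.map fun bb => max (r n) (abv (a n - bb))).prod :=
    fun n => gaussSN_factor habv (hr0 n) (a n) f
  have hNf : N f = abv f.leadingCoeff * (f.roots.map fun bb => N (X - C bb)).prod :=
    N_factor habv hN f
  have htendprod : ∀ s : Multiset K,
      Tendsto (fun n => (s.map fun bb => max (r n) (abv (a n - bb))).prod) atTop
        (nhds ((s.map fun bb => N (X - C bb)).prod)) := by
    intro s
    induction s using Multiset.induction with
    | empty => simpa using tendsto_const_nhds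
    | cons bb s ih =>
      simp only [Multiset.map_cons, Multiset.prod_cons]
      exact (hfac bb).mul ih
  have htends : Tendsto (fun n => gaussSN abv (a n) (r n) f) atTop (nhds (N f)) := by
    rw [hNf]
    exact ((htendprod f.roots).const_mul (abv f.leadingCoeff)).congr
      fun n => (hgauss n).symm
  have hle : ∀ n, N f ≤ gaussSN abv (a n) (r n) f := by
    intro n
    rw [hNf, hgauss n]
    refine mul_le_mul_of_nonneg_left ?_ (habv.1 _)
    exact (multiset_prod_le (fun bb => hN.1 _) (fun bb => hfac_le bb n) f.roots).2
  refine ⟨?_, htends⟩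
  refine le_antisymm (le_ciInf hle) ?_
  refine ge_of_tendsto htends (Eventually.of_forall fun n => ?_)
  exact ciInf_le ⟨N f, by rintro x ⟨m, rfl⟩; exact hle m⟩ n
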